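/- For every t ∈ T(u), the affected sources of t are contained in the affected sources of v: S(t) ⊆ S(v). -/

import Mathlib

set_option linter.unusedSectionVars false
set_option linter.unusedVariables false
set_option maxHeartbeats 1000000


open scoped BigOperators

/-- A directed graph on vertex set `V` with positive real edge weights. -/
structure WDigraph (V : Type*) where
  /-- the edge relation -/
  E : V → V → Prop
  /-- the edge weights -/
  w : V → V → ℝ
  /-- weights of edges are positive -/
  pos : ∀ a b, E a b → 0 < w a b

namespace WDigraph

variable {V : Type*} [Fintype V] [DecidableEq V]

/-- `p` is a simple path from `s` to `t` in `G`: a nonempty list of pairwise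
distinct vertices starting at `s`, ending at `t`, consecutive vertices joined
by edges. (Since all weights are positive, every shortest path is simple, so
it suffices to consider simple paths throughout.) -/
def IsPath (G : WDigraph V) (s t : V) (p : List V) : Prop :=
  List.Chain' G.E p ∧ p.head? = some s ∧ p.getLast? = some t ∧ p.Nodup

/-- The total weight of a list of vertices (sum of the weights of consecutive pairs). -/
def pw (G : WDigraph V) : List V → ℝ
  | [] => 0
  | [_] => 0
  | a :: b :: r => G.w a b + G.pw (b :: r)

/-- `d(s,t)`: shortest-path distance from `s` to `t`, equal to `⊤` (infinity)
if `t` is unreachable from `s`. -/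
noncomputable def dist (G : WDigraph V) (s t : V) : EReal :=
  sInf ((fun p => (G.pw p : EReal)) '' {p | G.IsPath s t p})

/-- The set of shortest `s`-`t` paths in `G`. -/
def SP (G : WDigraph V) (s t : V) : Set (List V) :=
  {p | G.IsPath s t p ∧ (G.pw p : EReal) = G.dist s t}

/-- `σ_{st}`: the number of shortest `s`-`t` paths in `G`. -/
noncomputable def sigma (G : WDigraph V) (s t : V) : ℕ :=
  (G.SP s t).ncard

/-- `σ_{st}(v)`: the number of shortest `s`-`t` paths in `G` that contain `v`. -/
noncomputable def sigmaV (G : WDigraph V) (s t v : V) : ℕ :=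
  {p ∈ G.SP s t | v ∈ p}.ncard

/-- `σ_{st}(v,w)`: the number of shortest `s`-`t` paths in `G` using the edge `(v,w)`. -/
noncomputable def sigmaE (G : WDigraph V) (s t v w : V) : ℕ :=
  {p ∈ G.SP s t | [v, w] <:+: p}.ncard

/-- `P_s(t)`: the set of predecessors of `t` with respect to source `s`:
nodes `y` with `(y,t) ∈ E` and `d(s,y) + ω(y,t) = d(s,t) < ∞`. -/
def pred (G : WDigraph V) (s t : V) : Set V :=
  {y | G.E y t ∧ G.dist s y + (G.w y t : EReal) = G.dist s t ∧ G.dist s t < ⊤}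

/-- `δ_{s•}(v)`: Brandes's one-sided dependency of `s` on `v`
(a summand is `0` whenever its denominator is `0`, which is automatic since
in Lean division by zero yields zero). -/
noncomputable def delta (G : WDigraph V) (s v : V) : ℝ :=
  ∑ᶠ t ∈ {t : V | t ≠ s ∧ t ≠ v}, (G.sigmaV s t v : ℝ) / (G.sigma s t : ℝ)

/-- `c_B(v)`: the betweenness centrality of `v`. -/
noncomputable def bc (G : WDigraph V) (v : V) : ℝ :=
  ∑ᶠ s ∈ {s : V | s ≠ v}, G.delta s v

/-- `G'` is obtained from `G` by the incremental update `(u, v, ω'(u,v))`: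
either a new edge `(u,v) ∉ E` is inserted with positive weight, or the weight
of the existing edge `(u,v)` is decreased; all other edges and weights are
unchanged. (Positivity of all weights is part of the `WDigraph` structure.) -/
structure IsUpdate (G G' : WDigraph V) (u v : V) : Prop where
  /-- the updated edge is present in `G'` -/
  edge' : G'.E u v
  /-- `E' = E ∪ {(u,v)}` -/
  edge_iff : ∀ a b, G'.E a b ↔ G.E a b ∨ a = u ∧ b = v
  /-- `ω'` agrees with `ω` on all edges other than `(u,v)` -/
  weight_eq : ∀ a b, ¬(a = u ∧ b = v) → G'.w a b = G.w a b
  /-- either an insertion of a new edge, or a weight decrease of an existing one -/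
  insert_or_decrease : ¬ G.E u v ∨ (G.E u v ∧ G'.w u v < G.w u v)

/-- `S(t)`: the affected sources of `t`. -/
def affS (G G' : WDigraph V) (t : V) : Set V :=
  {s | G.dist s t > G'.dist s t ∨ G.sigma s t ≠ G'.sigma s t}

/-- `T(s)`: the affected targets of `s`. -/
def affT (G G' : WDigraph V) (s : V) : Set V :=
  {t | G.dist s t > G'.dist s t ∨ G.sigma s t ≠ G'.sigma s t}

/-- `Δ_{s•}(v) = Σ_{t ∈ T(s), t ≠ v} σ_{st}(v)/σ_{st}`, computed in `G`
(`0`-convention for zero denominators). -/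
noncomputable def Delta (G G' : WDigraph V) (s v : V) : ℝ :=
  ∑ᶠ t ∈ {t : V | t ∈ affT G G' s ∧ t ≠ v}, (G.sigmaV s t v : ℝ) / (G.sigma s t : ℝ)

/-- `Δ'_{s•}(v) = Σ_{t ∈ T(s), t ≠ v} σ'_{st}(v)/σ'_{st}`, computed in `G'`
(`0`-convention for zero denominators). -/
noncomputable def Delta' (G G' : WDigraph V) (s v : V) : ℝ :=
  ∑ᶠ t ∈ {t : V | t ∈ affT G G' s ∧ t ≠ v}, (G'.sigmaV s t v : ℝ) / (G'.sigma s t : ℝ)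

-- auxiliary lemmas

-- ### list utilities

lemma head?_append_left {α : Type*} {l l' : List α} (hl : l ≠ []) :
    (l ++ l').head? = l.head? := by
  cases l with
  | nil => exact absurd rfl hl
  | cons a t => simp

lemma getLast?_append_right {α : Type*} {l l' : List α} (hl' : l' ≠ []) :
    (l ++ l').getLast? = l'.getLast? := by
  rw [List.getLast?_append]
  have : l'.getLast?.isSome := by
    rwa [List.getLast?_isSome]
  obtain ⟨x, hx⟩ := Option.isSome_iff_exists.mp this
  simp [hx]

-- ### pw basics

lemma pw_nonneg (G : WDigraph V) : ∀ {p : List V}, List.Chain' G.E p → 0 ≤ G.pw p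
  | [], _ => le_refl _
  | [_], _ => le_refl _
  | a :: b :: r, h => by
    rw [List.Chain', List.isChain_cons_cons] at h
    have h1 := G.pos a b h.1
    have h2 := pw_nonneg G h.2
    simp only [pw]; linarith

lemma pw_split (G : WDigraph V) (x : V) : ∀ (l₁ l₂ : List V),
    G.pw (l₁ ++ x :: l₂) = G.pw (l₁ ++ [x]) + G.pw (x :: l₂)
  | [], l₂ => by
    cases l₂ <;> simp [pw]
  | [a], l₂ => by simp [pw]
  | a :: b :: l₁, l₂ => by
    have := pw_split G x (b :: l₁) l₂
    simp only [List.cons_append, List.append_eq, pw] at this ⊢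
    linarith


def IsWalk (G : WDigraph V) (s t : V) (p : List V) : Prop :=
  List.Chain' G.E p ∧ p.head? = some s ∧ p.getLast? = some t

lemma exists_path_of_walk (G : WDigraph V) :
    ∀ (n : ℕ) (p : List V), p.length ≤ n → ∀ s t, G.IsWalk s t p →
    ∃ q, List.Sublist q p ∧ G.IsPath s t q ∧ G.pw q ≤ G.pw p := by
  intro n
  induction n with
  | zero =>
    intro p hp s t hw
    rw [Nat.le_zero, List.length_eq_zero_iff] at hp
    subst hp
    simp [IsWalk] at hw
  | succ n ih =>
    intro p hp s t hw
    by_cases hnd : p.Nodup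
    · exact ⟨p, List.Sublist.refl p, ⟨hw.1, hw.2.1, hw.2.2, hnd⟩, le_refl _⟩
    obtain ⟨a, rest, rfl⟩ : ∃ a rest, p = a :: rest := by
      cases p with
      | nil => simp at hnd
      | cons a r => exact ⟨a, r, rfl⟩
    have hsa : a = s := by simpa using hw.2.1
    by_cases ha : a ∈ rest
    · obtain ⟨B, C, rfl⟩ := List.append_of_mem ha
      have hsubl : List.Sublist (a :: C) (a :: (B ++ a :: C)) :=
        (List.sublist_append_right B (a :: C)).cons a
      have hlen : (a :: C).length ≤ n := by
        simp only [List.length_cons, List.length_append] at hp ⊢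
        omega
      have hchain : List.Chain' G.E (a :: C) := by
        refine hw.1.suffix ⟨a :: B, by simp⟩
      have hlast : (a :: C).getLast? = some t := by
        have h2 : (a :: (B ++ a :: C)) = (a :: B) ++ (a :: C) := by simp
        have := hw.2.2
        rw [h2, getLast?_append_right (by simp)] at this
        exact this
      have hwalk : G.IsWalk a t (a :: C) := ⟨hchain, by simp, hlast⟩
      obtain ⟨q, hq1, hq2, hq3⟩ := ih (a :: C) hlen a t hwalk
      refine ⟨q, hq1.trans hsubl, by rwa [hsa] at hq2, ?_⟩
      have hsplit : G.pw (a :: (B ++ a :: C)) = G.pw ((a :: B) ++ [a]) + G.pw (a :: C) := by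
        have := G.pw_split a (a :: B) C
        simpa using this
      have hpre : List.Chain' G.E ((a :: B) ++ [a]) :=
        hw.1.prefix ⟨C, by simp⟩
      have := G.pw_nonneg hpre
      have := hq3
      rw [hsplit]
      linarith
    · -- a not in rest : recurse on rest
      have hrest_ne : rest ≠ [] := by
        rintro rfl
        exact hnd (by simp)
      obtain ⟨b, rest', rfl⟩ : ∃ b rest', rest = b :: rest' := by
        cases rest with
        | nil => exact absurd rfl hrest_ne
        | cons b r => exact ⟨b, r, rfl⟩
      have hlen : (b :: rest').length ≤ n := by
        simp only [List.length_cons] at hp ⊢; omega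
      have hwalk : G.IsWalk b t (b :: rest') := by
        refine ⟨hw.1.tail, by simp, ?_⟩
        have := hw.2.2
        rwa [List.getLast?_cons_cons] at this
      obtain ⟨q, hq1, hq2, hq3⟩ := ih (b :: rest') hlen b t hwalk
      obtain ⟨c, q', rfl⟩ : ∃ c q', q = c :: q' := by
        cases q with
        | nil => simp [IsPath] at hq2
        | cons c r => exact ⟨c, r, rfl⟩
      have hcb : c = b := by simpa using hq2.2.1
      subst hcb
      have haq : a ∉ c :: q' := fun hmem => ha (hq1.mem hmem)
      refine ⟨a :: c :: q', hq1.cons₂ a, ⟨?_, by simp [hsa], ?_, ?_⟩, ?_⟩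
      · rw [List.Chain', List.isChain_cons_cons]
        exact ⟨(List.isChain_cons_cons.mp hw.1).1, hq2.1⟩
      · rw [List.getLast?_cons_cons] at *
        exact hq2.2.2.1
      · exact List.nodup_cons.mpr ⟨haq, hq2.2.2.2⟩
      · have hR := (List.isChain_cons_cons.mp hw.1).1
        simp only [pw] at *
        linarith


-- ### dist basics

lemma paths_finite (G : WDigraph V) (s t : V) : {p | G.IsPath s t p}.Finite := by
  apply Set.Finite.subset (List.finite_length_le V (Fintype.card V))
  intro p hp
  exact hp.2.2.2.length_le_card

lemma dist_le_pw (G : WDigraph V) {s t : V} {p : List V} (hp : G.IsPath s t p) :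
    G.dist s t ≤ (G.pw p : EReal) :=
  sInf_le (Set.mem_image_of_mem _ hp)

lemma dist_nonneg (G : WDigraph V) (s t : V) : (0 : EReal) ≤ G.dist s t := by
  refine le_sInf ?_
  rintro b ⟨p, hp, rfl⟩
  show (0 : EReal) ≤ (G.pw p : EReal)
  exact_mod_cast G.pw_nonneg hp.1

lemma dist_ne_bot (G : WDigraph V) (s t : V) : G.dist s t ≠ ⊥ :=
  fun h => by simpa [h] using G.dist_nonneg s t

lemma exists_sp (G : WDigraph V) {s t : V} (h : G.dist s t ≠ ⊤) :
    ∃ p, G.IsPath s t p ∧ (G.pw p : EReal) = G.dist s t := by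
  have hne : ((fun p => (G.pw p : EReal)) '' {p | G.IsPath s t p}).Nonempty := by
    by_contra hempty
    rw [Set.not_nonempty_iff_eq_empty] at hempty
    exact h (by rw [dist, hempty, sInf_empty])
  have hfin : ((fun p => (G.pw p : EReal)) '' {p | G.IsPath s t p}).Finite :=
    (G.paths_finite s t).image _
  have := hne.csInf_mem hfin
  obtain ⟨p, hp, hpe⟩ := this
  exact ⟨p, hp, hpe⟩

lemma dist_triangle (G : WDigraph V) (s v t : V) :
    G.dist s t ≤ G.dist s v + G.dist v t := by
  by_cases h1 : G.dist s v = ⊤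
  · rw [h1, EReal.top_add_of_ne_bot (G.dist_ne_bot v t)]
    exact le_top
  by_cases h2 : G.dist v t = ⊤
  · rw [h2, EReal.add_top_of_ne_bot (G.dist_ne_bot s v)]
    exact le_top
  obtain ⟨p1, hp1, he1⟩ := G.exists_sp h1
  obtain ⟨p2, hp2, he2⟩ := G.exists_sp h2
  obtain ⟨p1', rfl⟩ : ∃ p1', p1 = p1' ++ [v] := by
    obtain ⟨l, hl⟩ := List.getLast?_eq_some_iff.mp hp1.2.2.1
    exact ⟨l, hl⟩
  obtain ⟨p2t, rfl⟩ : ∃ p2t, p2 = v :: p2t := by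
    cases p2 with
    | nil => exact absurd hp2.2.1 (by simp)
    | cons c r =>
      have : c = v := by simpa using hp2.2.1
      exact ⟨r, by rw [this]⟩
  set wk : List V := p1' ++ v :: p2t with hwk
  have hchain : List.Chain' G.E wk := by
    rw [hwk, List.Chain', List.isChain_append]
    have h1c := hp1.1
    rw [List.Chain', List.isChain_append] at h1c
    exact ⟨h1c.1, hp2.1, fun x hx y hy => by
      have hyv : v = y := by simpa using hy
      subst hyv
      exact h1c.2.2 x hx v (by simp)⟩
  have hhead : wk.head? = some s := by
    have := hp1.2.1
    rw [List.head?_append] at this ⊢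
    cases hp1' : p1'.head? with
    | none => simpa [hp1'] using this
    | some x => simpa [hp1'] using this
  have hlast : wk.getLast? = some t := by
    rw [hwk, getLast?_append_right (by simp)]
    exact hp2.2.2.1
  have hpw : G.pw wk = G.pw (p1' ++ [v]) + G.pw (v :: p2t) := G.pw_split v p1' p2t
  obtain ⟨q, _, hq2, hq3⟩ := G.exists_path_of_walk wk.length wk (le_refl _) s t
    ⟨hchain, hhead, hlast⟩
  calc G.dist s t ≤ (G.pw q : EReal) := G.dist_le_pw hq2
    _ ≤ ((G.pw (p1' ++ [v]) + G.pw (v :: p2t) : ℝ) : EReal) := by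
        rw [← hpw]; exact_mod_cast hq3
    _ = G.dist s v + G.dist v t := by rw [EReal.coe_add, he1, he2]


-- ### update lemmas

section Update

variable {G G' : WDigraph V} {u v : V}

lemma IsUpdate.chain_mono (h : IsUpdate G G' u v) {p : List V}
    (hc : List.Chain' G.E p) : List.Chain' G'.E p :=
  hc.imp (fun a b hab => (h.edge_iff a b).mpr (Or.inl hab))

lemma IsUpdate.w_le (h : IsUpdate G G' u v) {a b : V} (hab : G.E a b) :
    G'.w a b ≤ G.w a b := by
  by_cases huv : a = u ∧ b = v
  · obtain ⟨rfl, rfl⟩ := huv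
    rcases h.insert_or_decrease with hc | hc
    · exact absurd hab hc
    · exact le_of_lt hc.2
  · rw [h.weight_eq a b huv]

lemma IsUpdate.pw_le (h : IsUpdate G G' u v) : ∀ {p : List V},
    List.Chain' G.E p → G'.pw p ≤ G.pw p
  | [], _ => le_refl _
  | [_], _ => le_refl _
  | a :: b :: r, hc => by
    rw [List.Chain', List.isChain_cons_cons] at hc
    have h1 := h.w_le hc.1
    have h2 := h.pw_le hc.2
    simp only [pw]
    linarith

lemma not_infix_tail {a : V} {l : List V} (hn : ¬ ([u, v] <:+: (a :: l))) :
    ¬ ([u, v] <:+: l) :=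
  fun hin => hn (hin.trans (List.infix_cons (List.infix_refl l)))

lemma IsUpdate.pw_eq_of_not_infix (h : IsUpdate G G' u v) : ∀ {p : List V},
    ¬ ([u, v] <:+: p) → G'.pw p = G.pw p
  | [], _ => rfl
  | [_], _ => rfl
  | a :: b :: r, hn => by
    have hab : ¬(a = u ∧ b = v) := by
      rintro ⟨rfl, rfl⟩
      exact hn ⟨[], r, rfl⟩
    have htail := h.pw_eq_of_not_infix (not_infix_tail hn)
    simp only [pw, h.weight_eq a b hab, htail]

lemma IsUpdate.chain_back (h : IsUpdate G G' u v) : ∀ {p : List V},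
    List.Chain' G'.E p → ¬ ([u, v] <:+: p) → List.Chain' G.E p
  | [], _, _ => List.isChain_nil
  | [_], _, _ => List.isChain_singleton _
  | a :: b :: r, hc, hn => by
    rw [List.Chain', List.isChain_cons_cons] at hc ⊢
    have hab : ¬(a = u ∧ b = v) := by
      rintro ⟨rfl, rfl⟩
      exact hn ⟨[], r, rfl⟩
    refine ⟨?_, h.chain_back hc.2 (not_infix_tail hn)⟩
    rcases (h.edge_iff a b).mp hc.1 with h1 | h1
    · exact h1
    · exact absurd h1 hab

lemma IsUpdate.pw_lt (h : IsUpdate G G' u v) (hGuv : G.E u v)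
    (hdec : G'.w u v < G.w u v) {p : List V} (hc : List.Chain' G.E p)
    (hin : [u, v] <:+: p) : G'.pw p < G.pw p := by
  obtain ⟨A, B, rfl⟩ : ∃ A B, p = A ++ u :: v :: B := by
    obtain ⟨X, Y, hXY⟩ := hin
    exact ⟨X, Y, by rw [← hXY]; simp⟩
  have hs1 : G'.pw (A ++ u :: (v :: B)) = G'.pw (A ++ [u]) + G'.pw (u :: v :: B) :=
    G'.pw_split u A (v :: B)
  have hs2 : G.pw (A ++ u :: (v :: B)) = G.pw (A ++ [u]) + G.pw (u :: v :: B) :=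
    G.pw_split u A (v :: B)
  have hpre : List.Chain' G.E (A ++ [u]) := hc.prefix ⟨v :: B, by simp⟩
  have hsuf : List.Chain' G.E (v :: B) := hc.suffix ⟨A ++ [u], by simp⟩
  have h1 := h.pw_le hpre
  have h2 := h.pw_le hsuf
  simp only [pw] at hs1 hs2 ⊢
  rw [hs1, hs2]
  linarith

lemma IsUpdate.dist_le (h : IsUpdate G G' u v) (s t : V) :
    G'.dist s t ≤ G.dist s t := by
  refine le_sInf ?_
  rintro b ⟨p, hp, rfl⟩
  have hp' : G'.IsPath s t p := ⟨h.chain_mono hp.1, hp.2.1, hp.2.2.1, hp.2.2.2⟩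
  calc G'.dist s t ≤ (G'.pw p : EReal) := G'.dist_le_pw hp'
    _ ≤ ((G.pw p : ℝ) : EReal) := by exact_mod_cast h.pw_le hp.1

-- decomposition of a path through the edge (u,v)

lemma path_decomp (H : WDigraph V) {s t : V} (u v : V) {A B : List V}
    (hp : H.IsPath s t (A ++ u :: v :: B)) :
    H.IsPath s v (A ++ [u, v]) ∧ H.IsPath v t (v :: B) ∧ ¬ ([u, v] <:+: (v :: B)) ∧
      H.pw (A ++ u :: v :: B) = H.pw (A ++ [u, v]) + H.pw (v :: B) := by
  obtain ⟨hc, hh, hl, hnd⟩ := hp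
  have heq1 : A ++ u :: v :: B = (A ++ [u, v]) ++ B := by simp
  have heq2 : A ++ u :: v :: B = (A ++ [u]) ++ v :: B := by simp
  have hndsuf : (u :: v :: B).Nodup := (List.sublist_append_right A _).nodup hnd
  have huv : u ≠ v := by simp at hndsuf; tauto
  have hvB : v ∉ B := by simp at hndsuf; tauto
  refine ⟨⟨?_, ?_, ?_, ?_⟩, ⟨?_, ?_, ?_, ?_⟩, ?_, ?_⟩
  · exact hc.prefix ⟨B, heq1.symm⟩
  · rw [heq1, head?_append_left (by simp)] at hh
    exact hh
  · rw [show A ++ [u, v] = (A ++ [u]) ++ [v] by simp, getLast?_append_right (by simp)]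
    rfl
  · exact ((heq1 ▸ (List.sublist_append_left (A ++ [u, v]) B)).nodup hnd)
  · exact hc.suffix ⟨A ++ [u], heq2.symm⟩
  · simp
  · rw [heq2, getLast?_append_right (by simp)] at hl
    exact hl
  · exact ((heq2 ▸ (List.sublist_append_right (A ++ [u]) (v :: B))).nodup hnd)
  · rintro ⟨X, Y, hXY⟩
    cases X with
    | nil =>
      simp at hXY
      exact huv hXY.1.symm.symm
    | cons x X' =>
      apply hvB
      have hXY' : v :: B = x :: (X' ++ u :: v :: Y) := by
        rw [← hXY]; simp
      rw [List.cons.injEq] at hXY'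
      rw [hXY'.2]
      simp
  · rw [heq2, H.pw_split v (A ++ [u]) B]
    simp


lemma IsUpdate.sp_v_eq (h : IsUpdate G G' u v) (s : V)
    (hdv : G'.dist s v = G.dist s v) (hsv : (G.SP s v).ncard = (G'.SP s v).ncard) :
    G.SP s v = G'.SP s v := by
  have hsub : G.SP s v ⊆ G'.SP s v := by
    rintro p ⟨hp, hpe⟩
    by_cases hin : [u, v] <:+: p
    · exfalso
      have hGuv : G.E u v := by
        have := hp.1.infix hin
        rwa [List.isChain_pair] at this
      rcases h.insert_or_decrease with hc | hc
      · exact hc hGuv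
      · have hlt := h.pw_lt hGuv hc.2 hp.1 hin
        have hp' : G'.IsPath s v p := ⟨h.chain_mono hp.1, hp.2.1, hp.2.2.1, hp.2.2.2⟩
        have h1 : G'.dist s v ≤ (G'.pw p : EReal) := G'.dist_le_pw hp'
        rw [hdv, ← hpe] at h1
        have : (G.pw p : EReal) ≤ (G'.pw p : EReal) := h1
        rw [EReal.coe_le_coe_iff] at this
        linarith
    · refine ⟨⟨h.chain_mono hp.1, hp.2.1, hp.2.2.1, hp.2.2.2⟩, ?_⟩
      rw [h.pw_eq_of_not_infix hin, hpe, hdv]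
  refine Set.eq_of_subset_of_ncard_le hsub (le_of_eq hsv.symm) ?_
  exact (G'.paths_finite s v).subset (fun p hp => hp.1)

lemma IsUpdate.dist_sp_eq (h : IsUpdate G G' u v) (s : V)
    (hdv : G'.dist s v = G.dist s v) (hspv : G.SP s v = G'.SP s v) (t : V) :
    G'.dist s t = G.dist s t ∧ G'.SP s t = G.SP s t := by
  have hd : G'.dist s t = G.dist s t := by
    refine le_antisymm (h.dist_le s t) ?_
    refine le_sInf ?_
    rintro b ⟨p', hp', rfl⟩
    show G.dist s t ≤ (G'.pw p' : EReal)
    by_cases hin : [u, v] <:+: p'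
    · obtain ⟨A, B, rfl⟩ : ∃ A B, p' = A ++ u :: v :: B := by
        obtain ⟨X, Y, hXY⟩ := hin
        exact ⟨X, Y, by rw [← hXY]; simp⟩
      obtain ⟨hq1, hq2, hq2n, hps⟩ := G'.path_decomp u v hp'
      have key1 : G.dist s v ≤ (G'.pw (A ++ [u, v]) : EReal) := by
        rw [← hdv]; exact G'.dist_le_pw hq1
      have key2 : G.dist v t ≤ (G'.pw (v :: B) : EReal) := by
        have hq2G : G.IsPath v t (v :: B) :=
          ⟨h.chain_back hq2.1 hq2n, hq2.2.1, hq2.2.2.1, hq2.2.2.2⟩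
        rw [h.pw_eq_of_not_infix hq2n]
        exact G.dist_le_pw hq2G
      calc G.dist s t ≤ G.dist s v + G.dist v t := G.dist_triangle s v t
        _ ≤ (G'.pw (A ++ [u, v]) : EReal) + (G'.pw (v :: B) : EReal) :=
            add_le_add key1 key2
        _ = ((G'.pw (A ++ u :: v :: B) : ℝ) : EReal) := by
            rw [hps, EReal.coe_add]
    · have hpG : G.IsPath s t p' := ⟨h.chain_back hp'.1 hin, hp'.2.1, hp'.2.2.1, hp'.2.2.2⟩
      rw [h.pw_eq_of_not_infix hin]
      exact G.dist_le_pw hpG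
  refine ⟨hd, ?_⟩
  ext p'
  constructor
  · rintro ⟨hp', hpe'⟩
    by_cases hin : [u, v] <:+: p'
    · exfalso
      obtain ⟨A, B, rfl⟩ : ∃ A B, p' = A ++ u :: v :: B := by
        obtain ⟨X, Y, hXY⟩ := hin
        exact ⟨X, Y, by rw [← hXY]; simp⟩
      obtain ⟨hq1, hq2, hq2n, hps⟩ := G'.path_decomp u v hp'
      set a : ℝ := G'.pw (A ++ [u, v]) with ha
      set b : ℝ := G'.pw (v :: B) with hb
      have key1 : G.dist s v ≤ (a : EReal) := by
        rw [← hdv]; exact G'.dist_le_pw hq1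
      have hq2G : G.IsPath v t (v :: B) :=
        ⟨h.chain_back hq2.1 hq2n, hq2.2.1, hq2.2.2.1, hq2.2.2.2⟩
      have hbG : G.pw (v :: B) = b := (h.pw_eq_of_not_infix hq2n).symm
      have key2 : G.dist v t ≤ (b : EReal) := by
        rw [← hbG]; exact G.dist_le_pw hq2G
      have hsum : (a : EReal) + (b : EReal) = G.dist s t := by
        rw [← EReal.coe_add, ← hps, hpe', hd]
      have htri : G.dist s t ≤ G.dist s v + G.dist v t := G.dist_triangle s v t
      -- extract real values
      have hαtop : G.dist s v ≠ ⊤ := ne_top_of_le_ne_top (by simp) key1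
      have hβtop : G.dist v t ≠ ⊤ := ne_top_of_le_ne_top (by simp) key2
      set α : ℝ := (G.dist s v).toReal with hα
      set β : ℝ := (G.dist v t).toReal with hβ
      have hαe : (α : EReal) = G.dist s v := EReal.coe_toReal hαtop (G.dist_ne_bot s v)
      have hβe : (β : EReal) = G.dist v t := EReal.coe_toReal hβtop (G.dist_ne_bot v t)
      have h1 : α ≤ a := by rw [← EReal.coe_le_coe_iff, hαe]; exact key1
      have h2 : β ≤ b := by rw [← EReal.coe_le_coe_iff, hβe]; exact key2
      have h3 : a + b ≤ α + β := by
        rw [← EReal.coe_le_coe_iff, EReal.coe_add, EReal.coe_add, hαe, hβe, hsum]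
        exact htri
      have haα : a = α := by linarith
      -- q1 is a shortest path in G' from s to v
      have hq1sp : (A ++ [u, v]) ∈ G'.SP s v := by
        refine ⟨hq1, ?_⟩
        rw [← ha, haα, hαe, ← hdv]
      rw [← hspv] at hq1sp
      obtain ⟨hq1G, hq1Ge⟩ := hq1sp
      have hinq1 : [u, v] <:+: (A ++ [u, v]) := ⟨A, [], by simp⟩
      have hGuv : G.E u v := by
        have := hq1G.1.infix hinq1
        rwa [List.isChain_pair] at this
      rcases h.insert_or_decrease with hc | hc
      · exact hc hGuv
      · have hlt := h.pw_lt hGuv hc.2 hq1G.1 hinq1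
        have : G.pw (A ++ [u, v]) = α := by
          rw [← EReal.coe_eq_coe_iff, hq1Ge, hαe]
        rw [this, ← ha, haα] at hlt
        exact lt_irrefl _ hlt
    · have hpG : G.IsPath s t p' := ⟨h.chain_back hp'.1 hin, hp'.2.1, hp'.2.2.1, hp'.2.2.2⟩
      refine ⟨hpG, ?_⟩
      rw [← h.pw_eq_of_not_infix hin, hpe', hd]
  · rintro ⟨hp, hpe⟩
    by_cases hin : [u, v] <:+: p'
    · exfalso
      have hGuv : G.E u v := by
        have := hp.1.infix hin
        rwa [List.isChain_pair] at this
      rcases h.insert_or_decrease with hc | hc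
      · exact hc hGuv
      · have hlt := h.pw_lt hGuv hc.2 hp.1 hin
        have hp' : G'.IsPath s t p' := ⟨h.chain_mono hp.1, hp.2.1, hp.2.2.1, hp.2.2.2⟩
        have h1 : G'.dist s t ≤ (G'.pw p' : EReal) := G'.dist_le_pw hp'
        rw [hd, ← hpe] at h1
        rw [EReal.coe_le_coe_iff] at h1
        linarith
    · refine ⟨⟨h.chain_mono hp.1, hp.2.1, hp.2.2.1, hp.2.2.2⟩, ?_⟩
      rw [h.pw_eq_of_not_infix hin, hpe, hd]

end Update

/-- For every `t ∈ T(u)`, the affected sources of `t` are contained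
in the affected sources of `v`: `S(t) ⊆ S(v)`. -/
theorem affS_subset_affS_v (G G' : WDigraph V) (u v : V)
    (h : IsUpdate G G' u v) (t : V) (ht : t ∈ affT G G' u) :
    affS G G' t ⊆ affS G G' v := by
  intro s hs
  by_contra hnv
  simp only [affS, Set.mem_setOf_eq, not_or, not_lt, ne_eq, not_not] at hnv
  obtain ⟨hle, hsig⟩ := hnv
  have hdv : G'.dist s v = G.dist s v := le_antisymm (h.dist_le s v) hle
  have hspv : G.SP s v = G'.SP s v := h.sp_v_eq s hdv hsig
  obtain ⟨hd, hsp⟩ := h.dist_sp_eq s hdv hspv t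
  rcases hs with hlt | hne
  · rw [hd] at hlt
    exact lt_irrefl _ hlt
  · exact hne (by rw [sigma, sigma, hsp])

end WDigraph
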